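/- In ℚ₃, any square root a of -5 (which exists since -5 ≡ 1 mod 3 is a square in ℤ₃) with a ≡ 2 (mod 3) satisfies: v₃(-142 + 17a) = 2 and v₃(-62 + 5a) = 0, hence v₃((-142+17a)/147) = 1 and v₃((-62+5a)/63) = -2. -/

import Mathlib

instance : Fact (Nat.Prime 3) := ⟨by norm_num⟩

lemma val_of_norm {x : ℚ_[3]} {n : ℤ} (h : ‖x‖ = (3:ℝ)^(-n)) : x.valuation = n := by
  have hx : x ≠ 0 := by
    intro h0
    rw [h0, norm_zero] at h
    have : (0:ℝ) < (3:ℝ)^(-n) := by positivity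
    linarith
  rw [Padic.norm_eq_zpow_neg_valuation hx] at h
  have := zpow_right_injective₀ (by norm_num : (0:ℝ) < 3) (by norm_num) h
  omega

lemma unit_norm {m : ℤ} (hm : ¬ (3:ℤ) ∣ m) : ‖((m:ℤ) : ℚ_[3])‖ = 1 := by
  refine le_antisymm (Padic.norm_int_le_one m) ?_
  by_contra h
  push_neg at h
  exact hm (by exact_mod_cast (Padic.norm_intCast_lt_one_iff (k := m)).mp h)

lemma const_norm (k : ℕ) (m : ℤ) (hm : ¬ (3:ℤ) ∣ m) :
    ‖((3:ℚ_[3])^k * (m:ℚ_[3]))‖ = (3:ℝ)^(-(k:ℤ)) := by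
  rw [norm_mul, unit_norm hm, mul_one]
  have := Padic.norm_p_pow (p := 3) k
  exact_mod_cast this

theorem three_adic_valuations (a : ℚ_[3]) (ha : a^2 = -5)
    (hmod : ‖a - 2‖ ≤ (3 : ℝ)⁻¹) :
    (-142 + 17*a).valuation = 2 ∧ (-62 + 5*a).valuation = 0 ∧
    ((-142 + 17*a)/147).valuation = 1 ∧ ((-62 + 5*a)/63).valuation = -2 := by
  -- norm of a+2 is 1
  have h4 : ‖(4:ℚ_[3])‖ = 1 := by
    have := unit_norm (m := 4) (by norm_num)
    simpa using this
  have hap2 : ‖a + 2‖ = 1 := by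
    have hne : ‖a - 2‖ ≠ ‖(4:ℚ_[3])‖ := by
      rw [h4]; intro h; rw [h] at hmod; norm_num at hmod
    have : a + 2 = (a - 2) + 4 := by ring
    rw [this, Padic.add_eq_max_of_ne hne, h4]
    rw [max_eq_right (le_trans hmod (by norm_num))]
  -- norm of a-2 is 3^(-2)
  have h9 : (a - 2) * (a + 2) = (3:ℚ_[3])^2 * ((-1 : ℤ) : ℚ_[3]) := by
    push_cast
    linear_combination ha
  have ham2 : ‖a - 2‖ = (3:ℝ)^(-2:ℤ) := by
    have := congrArg norm h9
    rw [norm_mul, hap2, mul_one, const_norm 2 (-1) (by norm_num)] at this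
    exact_mod_cast this
  -- first value
  have hx1 : (-142 + 17*a) = (3:ℚ_[3])^3 * ((-4:ℤ):ℚ_[3]) + ((17:ℤ):ℚ_[3]) * (a - 2) := by
    push_cast; ring
  have hn1 : ‖(-142 + 17*a)‖ = (3:ℝ)^(-2:ℤ) := by
    rw [hx1, Padic.add_eq_max_of_ne, const_norm 3 (-4) (by norm_num), norm_mul,
      unit_norm (by norm_num : ¬(3:ℤ)∣17), one_mul, ham2]
    · rw [max_eq_right (by norm_num)]
    · rw [const_norm 3 (-4) (by norm_num), norm_mul,
        unit_norm (by norm_num : ¬(3:ℤ)∣17), one_mul, ham2]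
      norm_num
  have hv1 : (-142 + 17*a).valuation = 2 := val_of_norm hn1
  -- second value
  have hx2 : (-62 + 5*a) = (3:ℚ_[3])^0 * ((-52:ℤ):ℚ_[3]) + ((5:ℤ):ℚ_[3]) * (a - 2) := by
    push_cast; ring
  have hn2 : ‖(-62 + 5*a)‖ = (3:ℝ)^(-(0:ℤ)) := by
    rw [hx2, Padic.add_eq_max_of_ne, const_norm 0 (-52) (by norm_num), norm_mul,
      unit_norm (by norm_num : ¬(3:ℤ)∣5), one_mul, ham2]
    · rw [max_eq_left (by norm_num)]; norm_num
    · rw [const_norm 0 (-52) (by norm_num), norm_mul,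
        unit_norm (by norm_num : ¬(3:ℤ)∣5), one_mul, ham2]
      norm_num
  have hv2 : (-62 + 5*a).valuation = 0 := val_of_norm hn2
  -- divisions
  have h147 : ‖(147:ℚ_[3])‖ = (3:ℝ)^(-1:ℤ) := by
    have := const_norm 1 49 (by norm_num)
    have e : ((3:ℚ_[3])^1 * ((49:ℤ):ℚ_[3])) = 147 := by push_cast; ring
    rwa [e] at this
  have h63 : ‖(63:ℚ_[3])‖ = (3:ℝ)^(-2:ℤ) := by
    have := const_norm 2 7 (by norm_num)
    have e : ((3:ℚ_[3])^2 * ((7:ℤ):ℚ_[3])) = 63 := by push_cast; ring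
    rwa [e] at this
  have hn3 : ‖(-142 + 17*a)/147‖ = (3:ℝ)^(-1:ℤ) := by
    rw [norm_div, hn1, h147]
    norm_num
  have hn4 : ‖(-62 + 5*a)/63‖ = (3:ℝ)^(-(-2):ℤ) := by
    rw [norm_div, hn2, h63]
    norm_num
  exact ⟨hv1, hv2, val_of_norm hn3, val_of_norm hn4⟩
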